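/- (Explicit Rayleigh's Monotonicity Law I) Let G be a finite connected weighted graph and let e_i be an edge of G with endpoints p_i, q_i and length L_i. If e_i is not a bridge, then for all vertices s, t of G: r_G(s,t) = r_{Ḡ_i}(s,t) + ((L_i + R_i)/(L_i·R_i))·( j_{p_i}(q_i,s) − j_{p_i}(q_i,t) )² = r_{Ḡ_i}(s,t) + (L_i/(R_i·(L_i + R_i)))·( j_{p_i}^{G−e_i}(q_i,s) − j_{p_i}^{G−e_i}(q_i,t) )²; in particular r_G(s,t) ≥ r_{Ḡ_i}(s,t), with equality if and only if j_{p_i}(q_i,s) = j_{p_i}(q_i,t). If e_i is a bridge, then r_G(s,t) = r_{Ḡ_i}(s,t) when s and t lie in the same connected component of G−e_i, and r_G(s,t) = r_{Ḡ_i}(s,t) + L_i otherwise. -/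

import Mathlib

open scoped Classical

/-- A finite weighted multigraph (resistive electrical network): finitely many
vertices and edges; each edge `e` has two endpoints `ends e` and a positive
length (resistance) `len e`.  Multiple edges and self-loops are allowed. -/
structure WMG where
  V : Type
  E : Type
  instV : Fintype V
  instE : Fintype E
  ends : E → V × V
  len : E → ℝ
  len_pos : ∀ e, 0 < len e

attribute [instance] WMG.instV WMG.instE

/-- The Moore–Penrose pseudoinverse of a real square matrix, characterized by
the four Penrose equations (it exists and is unique for real matrices). -/
noncomputable def Matrix.mpinv {n : Type} [Fintype n] (A : Matrix n n ℝ) : Matrix n n ℝ :=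
  if h : ∃ B : Matrix n n ℝ,
      A * B * A = A ∧ B * A * B = B ∧ Matrix.transpose (A * B) = A * B ∧ Matrix.transpose (B * A) = B * A
  then h.choose else 0

namespace WMG

/-- Indicator function. -/
noncomputable def ind {α : Type} (x y : α) : ℝ := if x = y then 1 else 0

/-- The weighted Laplacian: an edge `e` with endpoints `a, b` contributes
`(1/len e) * (δ_{ua} - δ_{ub}) * (δ_{va} - δ_{vb})` to the `(u,v)` entry.  So
the off-diagonal `(u,v)` entry is `-∑ 1/len e` over the edges joining `u` and
`v`, and all row sums are zero. -/
noncomputable def lap (G : WMG) : Matrix G.V G.V ℝ :=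
  ∑ e : G.E, (G.len e)⁻¹ •
    Matrix.of (fun u v : G.V =>
      (ind u (G.ends e).1 - ind u (G.ends e).2) *
      (ind v (G.ends e).1 - ind v (G.ends e).2))

/-- Effective resistance `r(p,q) = L⁺pp - 2·L⁺pq + L⁺qq`. -/
noncomputable def res (G : WMG) (p q : G.V) : ℝ :=
  G.lap.mpinv p p - 2 * G.lap.mpinv p q + G.lap.mpinv q q

/-- Voltage function `j_p(q,s) = L⁺pp - L⁺pq - L⁺ps + L⁺qs`. -/
noncomputable def volt (G : WMG) (p q s : G.V) : ℝ :=
  G.lap.mpinv p p - G.lap.mpinv p q - G.lap.mpinv p s + G.lap.mpinv q s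

/-- Two vertices are adjacent if some edge has them as its endpoints. -/
def Adj (G : WMG) (u v : G.V) : Prop :=
  ∃ e : G.E, G.ends e = (u, v) ∨ G.ends e = (v, u)

/-- `u` and `v` are joined by a walk in `G`. -/
def Reach (G : WMG) (u v : G.V) : Prop := Relation.ReflTransGen G.Adj u v

/-- `G` is connected. -/
def Connected (G : WMG) : Prop := Nonempty G.V ∧ ∀ u v : G.V, G.Reach u v

/-- Quotient graph: identify vertices along (the equivalence generated by) the
relation `r`; all edges are kept. -/
noncomputable def quot (G : WMG) (r : G.V → G.V → Prop) : WMG where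
  V := Quot r
  E := G.E
  instV := Fintype.ofFinite _
  instE := G.instE
  ends e := (Quot.mk r (G.ends e).1, Quot.mk r (G.ends e).2)
  len := G.len
  len_pos := G.len_pos

/-- The canonical map from the vertices of `G` to those of a quotient of `G`. -/
def quotMap (G : WMG) (r : G.V → G.V → Prop) : G.V → (G.quot r).V := Quot.mk r

/-- `G_{pq}`: identify the vertices `p` and `q`. -/
noncomputable def ident2 (G : WMG) (p q : G.V) : WMG :=
  G.quot (fun x y => x = p ∧ y = q)

def ident2Map (G : WMG) (p q : G.V) : G.V → (G.ident2 p q).V :=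
  G.quotMap _

/-- `G_{pqs}`: identify the vertices `p`, `q`, `s` into a single vertex. -/
noncomputable def ident3 (G : WMG) (p q s : G.V) : WMG :=
  G.quot (fun x y => (x = p ∧ y = q) ∨ (x = p ∧ y = s))

/-- `G_{pq,st}`: identify `p` with `q` and, separately, `s` with `t`. -/
noncomputable def ident22 (G : WMG) (p q s t : G.V) : WMG :=
  G.quot (fun x y => (x = p ∧ y = q) ∨ (x = s ∧ y = t))

/-- `G_S`: identify all vertices in the set `S` into a single vertex. -/
noncomputable def identSet (G : WMG) (S : Set G.V) : WMG :=
  G.quot (fun x y => x ∈ S ∧ y ∈ S)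

/-- `G − e`: delete the edge `e` (keeping all vertices). -/
noncomputable def delete (G : WMG) (e : G.E) : WMG where
  V := G.V
  E := {f : G.E // f ≠ e}
  instV := G.instV
  instE := Fintype.ofFinite _
  ends f := G.ends f.1
  len f := G.len f.1
  len_pos f := G.len_pos f.1

/-- `e` is a bridge if `G − e` is disconnected. -/
def IsBridge (G : WMG) (e : G.E) : Prop := ¬ (G.delete e).Connected

/-- `Ḡ_e`: contract the edge `e` (identify its endpoints and delete it). -/
noncomputable def contract (G : WMG) (e : G.E) : WMG :=
  (G.delete e).quot (fun x y => x = (G.ends e).1 ∧ y = (G.ends e).2)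

def contractMap (G : WMG) (e : G.E) : G.V → (G.contract e).V := Quot.mk _

/-- Replace the length of the edge `e` by `L'`. -/
noncomputable def setLen (G : WMG) (e : G.E) (L' : ℝ) (hL' : 0 < L') : WMG where
  V := G.V
  E := G.E
  instV := G.instV
  instE := G.instE
  ends := G.ends
  len f := if f = e then L' else G.len f
  len_pos f := by
    by_cases hf : f = e
    · simpa [hf] using hL'
    · simpa [hf] using G.len_pos f

/-- `T` is (the edge set of) a spanning tree of `G`: using only edges of `T`
any two vertices are joined, and `T` has (number of vertices) − 1 edges. -/
def IsSpanningTree (G : WMG) (T : Finset G.E) : Prop :=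
  (∀ u v : G.V, Relation.ReflTransGen
      (fun x y => ∃ e ∈ T, G.ends e = (x, y) ∨ G.ends e = (y, x)) u v) ∧
  T.card = Fintype.card G.V - 1

/-- `t G`: the number of spanning trees of `G` (equals `1` for a one-vertex
graph; self-loops contribute nothing). -/
noncomputable def t (G : WMG) : ℕ := Nat.card {T : Finset G.E // G.IsSpanningTree T}

/-- `t(G_{pq})`, with the convention `t(G_{pp}) = 0`. -/
noncomputable def t2 (G : WMG) (p q : G.V) : ℕ :=
  if p = q then 0 else (G.ident2 p q).t

/-- Disjoint union of two graphs. -/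
noncomputable def disjUnion (G₁ G₂ : WMG) : WMG where
  V := G₁.V ⊕ G₂.V
  E := G₁.E ⊕ G₂.E
  instV := inferInstance
  instE := inferInstance
  ends := Sum.elim (fun e => (Sum.inl (G₁.ends e).1, Sum.inl (G₁.ends e).2))
                   (fun e => (Sum.inr (G₂.ends e).1, Sum.inr (G₂.ends e).2))
  len := Sum.elim G₁.len G₂.len
  len_pos := by
    rintro (e | e)
    · exact G₁.len_pos e
    · exact G₂.len_pos e

/-- Glue `G₁` and `G₂` along two pairs of vertices (`p₁ ↔ p₂`, `q₁ ↔ q₂`):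
the result is the graph `G = G₁ ∪ G₂` with `G₁ ∩ G₂ = {p, q}` (the two pieces
share exactly these two vertices and no edges). -/
noncomputable def glue2 (G₁ G₂ : WMG) (p₁ q₁ : G₁.V) (p₂ q₂ : G₂.V) : WMG :=
  (G₁.disjUnion G₂).quot (fun x y =>
    (x = Sum.inl p₁ ∧ y = Sum.inr p₂) ∨ (x = Sum.inl q₁ ∧ y = Sum.inr q₂))

/-- Glue `G₁` and `G₂` along three pairs of vertices: the result is the graph
`G = G₁ ∪ G₂` with `G₁ ∩ G₂ = {p, q, s}`. -/
noncomputable def glue3 (G₁ G₂ : WMG) (p₁ q₁ s₁ : G₁.V) (p₂ q₂ s₂ : G₂.V) : WMG :=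
  (G₁.disjUnion G₂).quot (fun x y =>
    (x = Sum.inl p₁ ∧ y = Sum.inr p₂) ∨ (x = Sum.inl q₁ ∧ y = Sum.inr q₂) ∨
    (x = Sum.inl s₁ ∧ y = Sum.inr s₂))

/-- Disjoint union of a finite family of graphs. -/
noncomputable def sigmaGraph {k : ℕ} (G : Fin k → WMG) : WMG where
  V := Σ i, (G i).V
  E := Σ i, (G i).E
  instV := inferInstance
  instE := inferInstance
  ends e := (⟨e.1, ((G e.1).ends e.2).1⟩, ⟨e.1, ((G e.1).ends e.2).2⟩)
  len e := (G e.1).len e.2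
  len_pos e := (G e.1).len_pos e.2

/-- Glue the family `G i` along a common pair of vertices (all the `p i` are
identified together, and all the `q i` are identified together): the result is
`G = ⋃ G_i` with `G_i ∩ G_j = {p, q}` for all `i ≠ j`. -/
noncomputable def glueFam {k : ℕ} (G : Fin k → WMG) (p q : ∀ i, (G i).V) : WMG :=
  (sigmaGraph G).quot (fun x y =>
    (∃ i j, x = ⟨i, p i⟩ ∧ y = ⟨j, p j⟩) ∨ (∃ i j, x = ⟨i, q i⟩ ∧ y = ⟨j, q j⟩))

/-- The cyclic successor on `Fin k`. -/
def finSucc {k : ℕ} (i : Fin k) : Fin k :=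
  ⟨(i.1 + 1) % k, Nat.mod_lt _ (Nat.lt_of_le_of_lt (Nat.zero_le _) i.2)⟩

/-- `CG_k`: replace the `i`-th edge of the cycle `C_k` by the graph `G i`,
identifying `t i` (of `G i`) with `s (i+1)` (of `G (i+1)`), cyclically. -/
noncomputable def cycleGlue {k : ℕ} (G : Fin k → WMG) (s t : ∀ i, (G i).V) : WMG :=
  (sigmaGraph G).quot (fun x y =>
    ∃ i, x = ⟨i, t i⟩ ∧ y = ⟨finSucc i, s (finSucc i)⟩)

/-- Join a new vertex `u` (the vertex `none`) to the vertex `p i` of `H` by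
`a i` parallel unit edges, for each `i`.  The resulting graph `G` has `H = G − u`,
and if `p` is injective with all `a i ≥ 1` then `N_G(u) = {p 1, …, p n}` with
`a i` parallel edges joining `u` to `p i`. -/
noncomputable def cone (H : WMG) {n : ℕ} (p : Fin n → H.V) (a : Fin n → ℕ) : WMG where
  V := Option H.V
  E := H.E ⊕ (Σ i : Fin n, Fin (a i))
  instV := inferInstance
  instE := inferInstance
  ends := Sum.elim (fun e => (some (H.ends e).1, some (H.ends e).2))
                   (fun e => (none, some (p e.1)))
  len := Sum.elim H.len (fun _ => 1)
  len_pos := by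
    rintro (e | e)
    · exact H.len_pos e
    · exact one_pos

/-- The path graph `P_n` on `n` vertices `0, 1, …, n-1`, unit edge lengths. -/
noncomputable def path (n : ℕ) : WMG where
  V := Fin n
  E := Fin (n - 1)
  instV := inferInstance
  instE := inferInstance
  ends i := (⟨i.1, by have := i.2; omega⟩, ⟨i.1 + 1, by have := i.2; omega⟩)
  len _ := 1
  len_pos _ := one_pos

/-- The cycle graph `C_n` on `n` vertices, unit edge lengths. -/
noncomputable def cycle (n : ℕ) : WMG where
  V := Fin n
  E := Fin n
  instV := inferInstance
  instE := inferInstance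
  ends i := (i, finSucc i)
  len _ := 1
  len_pos _ := one_pos

/-- The modified fan graph `F̄an_n`: the path `P_n` together with one new hub
vertex joined to each path vertex by `a` parallel edges. -/
noncomputable def fanGraph (n a : ℕ) : WMG :=
  (path n).cone (fun i : Fin n => i) (fun _ => a)

/-- The modified wheel graph `W̄_n`: the cycle `C_n` together with one new hub
vertex joined to each cycle vertex by `a` parallel edges. -/
noncomputable def wheelGraph (n a : ℕ) : WMG :=
  (cycle n).cone (fun i : Fin n => i) (fun _ => a)

end WMG

/-- The Morgan–Voyce polynomial `B_m(x) = ∑_{k=0}^m C(m+k+1, m−k) x^k`. -/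
noncomputable def morganVoyce (m : ℕ) (x : ℝ) : ℝ :=
  ∑ k ∈ Finset.range (m + 1), (Nat.choose (m + k + 1) (m - k) : ℝ) * x ^ k

/-- The polynomial `W_m(x) = ∑_{k=0}^m ((2m+2)/(m+2+k)) C(m+2+k, m−k) x^k`. -/
noncomputable def wheelPoly (m : ℕ) (x : ℝ) : ℝ :=
  ∑ k ∈ Finset.range (m + 1),
    ((2 * m + 2 : ℝ) / (m + 2 + k : ℝ)) * (Nat.choose (m + 2 + k) (m - k) : ℝ) * x ^ k

/-- The Lucas numbers: `L₀ = 2`, `L₁ = 1`, `L_{m+2} = L_m + L_{m+1}`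
(so `L₂ = 3`). -/
def lucas : ℕ → ℕ
  | 0 => 2
  | 1 => 1
  | n + 2 => lucas n + lucas (n + 1)


section
open Matrix
theorem Matrix.mpinv_unique {n : Type} [Fintype n] (A B : Matrix n n ℝ)
    (h1 : A * B * A = A) (h2 : B * A * B = B)
    (h3 : (A * B)ᵀ = A * B) (h4 : (B * A)ᵀ = B * A) : A.mpinv = B := by
  have hex : ∃ B : Matrix n n ℝ,
      A * B * A = A ∧ B * A * B = B ∧ (A * B)ᵀ = A * B ∧ (B * A)ᵀ = B * A := ⟨B, h1, h2, h3, h4⟩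
  rw [Matrix.mpinv, dif_pos hex]
  obtain ⟨g1, g2, g3, g4⟩ := hex.choose_spec
  set C := hex.choose with hC
  have hAt : Aᵀ = Aᵀ * (A * B) := by
    conv_lhs => rw [← h1]
    rw [Matrix.transpose_mul, h3]
  have hAt' : Aᵀ = (B * A) * Aᵀ := by
    conv_lhs => rw [← h1, mul_assoc]
    rw [Matrix.transpose_mul, h4]
  have hAC : A * C = A * B := by
    calc A * C = (A * C)ᵀ := g3.symm
    _ = Cᵀ * Aᵀ := Matrix.transpose_mul _ _
    _ = Cᵀ * (Aᵀ * (A * B)) := by rw [← hAt]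
    _ = (A * C)ᵀ * (A * B) := by rw [Matrix.transpose_mul, mul_assoc]
    _ = A * C * (A * B) := by rw [g3]
    _ = A * C * A * B := by rw [mul_assoc, ← mul_assoc A C _, ← mul_assoc]
    _ = A * B := by rw [g1]
  have hCA : C * A = B * A := by
    calc C * A = (C * A)ᵀ := g4.symm
    _ = Aᵀ * Cᵀ := Matrix.transpose_mul _ _
    _ = (B * A) * (Aᵀ * Cᵀ) := by conv_lhs => rw [hAt', mul_assoc]
    _ = (B * A) * (C * A)ᵀ := by rw [Matrix.transpose_mul]
    _ = (B * A) * (C * A) := by rw [g4]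
    _ = B * (A * C * A) := by rw [mul_assoc, ← mul_assoc A C A]
    _ = B * A := by rw [g1]
  calc C = C * A * C := g2.symm
  _ = B * A * C := by rw [hCA]
  _ = B * (A * C) := mul_assoc _ _ _
  _ = B * (A * B) := by rw [hAC]
  _ = B * A * B := (mul_assoc _ _ _).symm
  _ = B := h2

end

namespace WMG
open Matrix

variable {V : Type} [Fintype V]

/-- difference of indicators -/
noncomputable def pv {V : Type} (s t : V) : V → ℝ := fun x => ind x s - ind x t

lemma ind_comm {α : Type} (x y : α) : ind x y = ind y x := by
  simp [ind, eq_comm]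

lemma sum_ind (s : V) : ∑ x : V, ind x s = 1 := by
  simp [ind, Finset.sum_ite_eq']

lemma sum_ind_mul (s : V) (y : V → ℝ) : ∑ x : V, ind x s * y x = y s := by
  rw [Finset.sum_congr rfl (fun x _ => ?_), Finset.sum_ite_eq' Finset.univ s y]
  · simp
  · simp only [ind]; split_ifs with h <;> simp [h]

lemma pv_dot (s t : V) (y : V → ℝ) : pv s t ⬝ᵥ y = y s - y t := by
  simp only [pv, dotProduct, sub_mul]
  rw [Finset.sum_sub_distrib, sum_ind_mul, sum_ind_mul]

lemma dot_pv (s t : V) (y : V → ℝ) : y ⬝ᵥ pv s t = y s - y t := by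
  rw [dotProduct_comm, pv_dot]

lemma pv_sum_zero (s t : V) : pv s t ⬝ᵥ (fun _ => (1:ℝ)) = 0 := by
  rw [pv_dot]; ring

lemma vecMulVec_mulVec (x y v : V → ℝ) :
    (vecMulVec x y).mulVec v = (y ⬝ᵥ v) • x := by
  funext u
  simp [vecMulVec, mulVec, dotProduct, Finset.mul_sum, mul_comm, mul_left_comm]

lemma sum_mulVec {ι : Type*} (s : Finset ι) (A : ι → Matrix V V ℝ) (v : V → ℝ) :
    (∑ i ∈ s, A i).mulVec v = ∑ i ∈ s, (A i).mulVec v := by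
  classical
  induction s using Finset.induction with
  | empty => simp [Matrix.zero_mulVec]
  | insert _ _ h ih => rw [Finset.sum_insert h, Finset.sum_insert h, Matrix.add_mulVec, ih]

lemma lap_eq (G : WMG) :
    G.lap = ∑ e : G.E, (G.len e)⁻¹ •
      vecMulVec (pv (G.ends e).1 (G.ends e).2) (pv (G.ends e).1 (G.ends e).2) := rfl

lemma lap_mulVec (G : WMG) (v : G.V → ℝ) :
    G.lap.mulVec v = ∑ e : G.E,
      ((G.len e)⁻¹ * (v (G.ends e).1 - v (G.ends e).2)) • pv (G.ends e).1 (G.ends e).2 := by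
  rw [lap_eq, sum_mulVec]
  refine Finset.sum_congr rfl fun e _ => ?_
  rw [smul_mulVec, vecMulVec_mulVec, pv_dot, smul_smul]

lemma lap_transpose (G : WMG) : G.lapᵀ = G.lap := by
  rw [lap_eq, Matrix.transpose_sum]
  refine Finset.sum_congr rfl fun e _ => ?_
  rw [Matrix.transpose_smul]
  congr 1
  ext u w
  simp [vecMulVec, mul_comm]

lemma dot_sum {ι : Type*} (s : Finset ι) (v : V → ℝ) (y : ι → V → ℝ) :
    v ⬝ᵥ (∑ i ∈ s, y i) = ∑ i ∈ s, v ⬝ᵥ y i := by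
  classical
  induction s using Finset.induction with
  | empty => simp
  | insert _ _ h ih => rw [Finset.sum_insert h, Finset.sum_insert h, dotProduct_add, ih]

lemma dot_lap_self (G : WMG) (v : G.V → ℝ) :
    v ⬝ᵥ G.lap.mulVec v = ∑ e : G.E, (G.len e)⁻¹ * (v (G.ends e).1 - v (G.ends e).2)^2 := by
  rw [lap_mulVec, dot_sum]
  refine Finset.sum_congr rfl fun e _ => ?_
  rw [dotProduct_smul, dot_pv]
  simp only [smul_eq_mul]; ring

lemma dot_lap_self_nonneg (G : WMG) (v : G.V → ℝ) : 0 ≤ v ⬝ᵥ G.lap.mulVec v := by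
  rw [dot_lap_self]
  refine Finset.sum_nonneg fun e _ => ?_
  have := G.len_pos e
  positivity

lemma dot_lap_eq_zero (G : WMG) (v : G.V → ℝ) (h : v ⬝ᵥ G.lap.mulVec v = 0) (e : G.E) :
    v (G.ends e).1 = v (G.ends e).2 := by
  rw [dot_lap_self] at h
  have h0 := (Finset.sum_eq_zero_iff_of_nonneg
    (fun e _ => by have := G.len_pos e; positivity)).mp h e (Finset.mem_univ e)
  have hl := G.len_pos e
  have : (v (G.ends e).1 - v (G.ends e).2)^2 = 0 := by
    have hinv : (0:ℝ) < (G.len e)⁻¹ := by positivity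
    nlinarith [sq_nonneg (v (G.ends e).1 - v (G.ends e).2)]
  nlinarith [this]

lemma lap_mulVec_const (G : WMG) (c : ℝ) : G.lap.mulVec (fun _ => c) = 0 := by
  rw [lap_mulVec]
  refine Finset.sum_eq_zero fun e _ => by simp

lemma eq_on_reach (G : WMG) (v : G.V → ℝ) (h : ∀ e : G.E, v (G.ends e).1 = v (G.ends e).2)
    {x y : G.V} (hxy : G.Reach x y) : v x = v y := by
  induction hxy with
  | refl => rfl
  | tail _ hadj ih =>
    obtain ⟨e, he | he⟩ := hadj
    · rw [ih]; have := h e; rw [he] at this; exact this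
    · rw [ih]; have := h e; rw [he] at this; exact this.symm


noncomputable def kmat (G : WMG) : Matrix G.V G.V ℝ :=
  (Fintype.card G.V : ℝ)⁻¹ • vecMulVec (fun _ => 1) (fun _ => 1)

lemma kmat_transpose (G : WMG) : G.kmatᵀ = G.kmat := by
  ext u w
  simp [kmat, vecMulVec]

lemma kmat_mulVec (G : WMG) (v : G.V → ℝ) :
    G.kmat.mulVec v = ((Fintype.card G.V : ℝ)⁻¹ * ∑ x, v x) • (fun _ => (1:ℝ)) := by
  rw [kmat, smul_mulVec, vecMulVec_mulVec, smul_smul]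
  congr 1
  simp [dotProduct]

lemma lap_mul_kmat (G : WMG) : G.lap * G.kmat = 0 := by
  ext u v
  have h := congrFun (G.lap_mulVec_const 1) u
  simp only [mulVec, dotProduct, mul_one, Pi.zero_apply] at h
  simp only [kmat, Matrix.mul_apply, Matrix.smul_apply, vecMulVec_apply, Matrix.zero_apply,
    smul_eq_mul, mul_one]
  rw [← Finset.sum_mul, h, zero_mul]

lemma kmat_mul_lap (G : WMG) : G.kmat * G.lap = 0 := by
  have := congrArg Matrix.transpose (G.lap_mul_kmat)
  rwa [Matrix.transpose_mul, kmat_transpose, lap_transpose, Matrix.transpose_zero] at this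

lemma kmat_mul_kmat (G : WMG) (h : Nonempty G.V) : G.kmat * G.kmat = G.kmat := by
  have hn : (0:ℝ) < (Fintype.card G.V : ℝ) := by
    exact_mod_cast Fintype.card_pos_iff.mpr h
  ext u v
  simp only [kmat, Matrix.mul_apply, Matrix.smul_apply, vecMulVec_apply, smul_eq_mul, mul_one,
    one_mul]
  rw [Finset.sum_const, Finset.card_univ, nsmul_eq_mul]
  field_simp

lemma mmat_det_isUnit (G : WMG) (hG : G.Connected) : IsUnit (G.lap + G.kmat).det := by
  rw [isUnit_iff_ne_zero]
  intro hdet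
  obtain ⟨v, hv0, hv⟩ := Matrix.exists_mulVec_eq_zero_iff.mpr hdet
  have hq : v ⬝ᵥ (G.lap + G.kmat).mulVec v = 0 := by rw [hv]; simp
  rw [Matrix.add_mulVec, dotProduct_add, kmat_mulVec, dotProduct_smul, smul_eq_mul] at hq
  have hdot1 : v ⬝ᵥ (fun _ => (1:ℝ)) = ∑ x, v x := by simp [dotProduct]
  rw [hdot1] at hq
  have hn : (0:ℝ) < (Fintype.card G.V : ℝ) := by
    exact_mod_cast Fintype.card_pos_iff.mpr hG.1
  have h1 : 0 ≤ v ⬝ᵥ G.lap.mulVec v := G.dot_lap_self_nonneg v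
  have hinv : (0:ℝ) < (Fintype.card G.V : ℝ)⁻¹ := by positivity
  have e1 : ((Fintype.card G.V : ℝ)⁻¹ * (∑ x, v x)) * (∑ x, v x)
      = (Fintype.card G.V : ℝ)⁻¹ * (∑ x, v x)^2 := by ring
  rw [e1] at hq
  have e2 : (0:ℝ) ≤ (Fintype.card G.V : ℝ)⁻¹ * (∑ x, v x)^2 := by positivity
  have e3 : (Fintype.card G.V : ℝ)⁻¹ * (∑ x, v x)^2 = 0 := by linarith
  have hS : (∑ x, v x) = 0 := by
    rcases mul_eq_zero.mp e3 with h | h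
    · exact absurd h hinv.ne'
    · exact pow_eq_zero_iff (by norm_num) |>.mp h
  have hL0 : v ⬝ᵥ G.lap.mulVec v = 0 := by rw [hS] at hq; linarith [hq]
  have hconst : ∀ x y : G.V, v x = v y := fun x y =>
    G.eq_on_reach v (fun e => G.dot_lap_eq_zero v hL0 e) (hG.2 x y)
  obtain ⟨x0⟩ := hG.1
  have hv0' : v x0 = 0 := by
    have : (∑ x, v x) = (Fintype.card G.V : ℝ) * v x0 := by
      rw [Finset.sum_congr rfl (fun x _ => hconst x x0)]
      simp [Finset.sum_const, Finset.card_univ, nsmul_eq_mul]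
    rw [this] at hS
    rcases mul_eq_zero.mp hS with h | h
    · exact absurd h hn.ne'
    · exact h
  exact hv0 (funext fun x => by rw [hconst x x0, hv0']; rfl)


lemma mpinv_lap_eq (G : WMG) (hG : G.Connected) :
    G.lap.mpinv = (G.lap + G.kmat)⁻¹ - G.kmat := by
  set L := G.lap with hL
  set K := G.kmat with hK
  set M := L + K with hM
  have hdet := G.mmat_det_isUnit hG
  have hMMinv : M * M⁻¹ = 1 := Matrix.mul_nonsing_inv M hdet
  have hMinvM : M⁻¹ * M = 1 := Matrix.nonsing_inv_mul M hdet
  have hKK : K * K = K := G.kmat_mul_kmat hG.1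
  have hLK : L * K = 0 := G.lap_mul_kmat
  have hKL : K * L = 0 := G.kmat_mul_lap
  have hMK : M * K = K := by rw [hM, add_mul, hLK, hKK, zero_add]
  have hKM : K * M = K := by rw [hM, mul_add, hKL, hKK, zero_add]
  have hMinvK : M⁻¹ * K = K := by
    calc M⁻¹ * K = M⁻¹ * (M * K) := by rw [hMK]
    _ = (M⁻¹ * M) * K := by rw [mul_assoc]
    _ = K := by rw [hMinvM, one_mul]
  have hKMinv : K * M⁻¹ = K := by
    calc K * M⁻¹ = (K * M) * M⁻¹ := by rw [hKM]
    _ = K * (M * M⁻¹) := by rw [mul_assoc]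
    _ = K := by rw [hMMinv, mul_one]
  have hLM : L = M - K := by rw [hM, add_sub_cancel_right]
  have hLMinv : L * M⁻¹ = 1 - K := by
    rw [hLM, sub_mul, hMMinv, hKMinv]
  have hMinvL : M⁻¹ * L = 1 - K := by
    rw [hLM, mul_sub, hMinvM, hMinvK]
  set B := M⁻¹ - K with hB
  have hLB : L * B = 1 - K := by rw [hB, mul_sub, hLMinv, hLK, sub_zero]
  have hBL : B * L = 1 - K := by rw [hB, sub_mul, hMinvL, hKL, sub_zero]
  have hKB : K * B = 0 := by rw [hB, mul_sub, hKMinv, hKK, sub_self]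
  have hKt : Kᵀ = K := G.kmat_transpose
  apply Matrix.mpinv_unique
  · rw [hLB, sub_mul, one_mul, hKL, sub_zero]
  · rw [hBL, sub_mul, one_mul, hKB, sub_zero]
  · rw [hLB, Matrix.transpose_sub, Matrix.transpose_one, hKt]
  · rw [hBL, Matrix.transpose_sub, Matrix.transpose_one, hKt]

lemma lap_mul_mpinv (G : WMG) (hG : G.Connected) :
    G.lap * G.lap.mpinv = 1 - G.kmat := by
  rw [mpinv_lap_eq G hG]
  set M := G.lap + G.kmat
  have hdet := G.mmat_det_isUnit hG
  have h1 : G.lap = M - G.kmat := by rw [add_sub_cancel_right]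
  rw [mul_sub, G.lap_mul_kmat, sub_zero, h1, sub_mul, Matrix.mul_nonsing_inv M hdet]
  have hKMinv : G.kmat * M⁻¹ = G.kmat := by
    have hKM : G.kmat * M = G.kmat := by
      show G.kmat * (G.lap + G.kmat) = G.kmat
      rw [mul_add, G.kmat_mul_lap, G.kmat_mul_kmat hG.1, zero_add]
    calc G.kmat * M⁻¹ = (G.kmat * M) * M⁻¹ := by rw [hKM]
    _ = G.kmat * (M * M⁻¹) := by rw [mul_assoc]
    _ = G.kmat := by rw [Matrix.mul_nonsing_inv M hdet, mul_one]
  rw [hKMinv]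

lemma mpinv_mul_lap (G : WMG) (hG : G.Connected) :
    G.lap.mpinv * G.lap = 1 - G.kmat := by
  rw [mpinv_lap_eq G hG]
  set M := G.lap + G.kmat
  have hdet := G.mmat_det_isUnit hG
  have h1 : G.lap = M - G.kmat := by rw [add_sub_cancel_right]
  rw [sub_mul, G.kmat_mul_lap, sub_zero, h1, mul_sub, Matrix.nonsing_inv_mul M hdet]
  have hMinvK : M⁻¹ * G.kmat = G.kmat := by
    have hMK : M * G.kmat = G.kmat := by
      show (G.lap + G.kmat) * G.kmat = G.kmat
      rw [add_mul, G.lap_mul_kmat, G.kmat_mul_kmat hG.1, zero_add]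
    calc M⁻¹ * G.kmat = M⁻¹ * (M * G.kmat) := by rw [hMK]
    _ = (M⁻¹ * M) * G.kmat := by rw [mul_assoc]
    _ = G.kmat := by rw [Matrix.nonsing_inv_mul M hdet, one_mul]
  rw [hMinvK]

lemma mpinv_lap_transpose (G : WMG) (hG : G.Connected) :
    G.lap.mpinvᵀ = G.lap.mpinv := by
  rw [mpinv_lap_eq G hG, Matrix.transpose_sub, kmat_transpose, Matrix.transpose_nonsing_inv]
  have : (G.lap + G.kmat)ᵀ = G.lap + G.kmat := by
    rw [Matrix.transpose_add, lap_transpose, kmat_transpose]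
  rw [this]

lemma mpinv_entry_symm (G : WMG) (hG : G.Connected) (u v : G.V) :
    G.lap.mpinv u v = G.lap.mpinv v u := by
  conv_lhs => rw [← mpinv_lap_transpose G hG]
  rfl

lemma mpinv_solve (G : WMG) (hG : G.Connected) {f b : G.V → ℝ} (a : G.V → ℝ)
    (hf : G.lap.mulVec f = b) (ha : ∑ x, a x = 0) :
    a ⬝ᵥ G.lap.mpinv.mulVec b = a ⬝ᵥ f := by
  rw [← hf, Matrix.mulVec_mulVec, mpinv_mul_lap G hG, Matrix.sub_mulVec, Matrix.one_mulVec,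
    dotProduct_sub, kmat_mulVec, dotProduct_smul, smul_eq_mul]
  have : (a ⬝ᵥ fun _ => (1:ℝ)) = ∑ x, a x := by simp [dotProduct]
  rw [this, ha, mul_zero, sub_zero]

lemma lap_mpinv_solution (G : WMG) (hG : G.Connected) {b : G.V → ℝ} (hb : ∑ x, b x = 0) :
    G.lap.mulVec (G.lap.mpinv.mulVec b) = b := by
  rw [Matrix.mulVec_mulVec, lap_mul_mpinv G hG, Matrix.sub_mulVec, Matrix.one_mulVec,
    kmat_mulVec, hb, mul_zero, zero_smul, sub_zero]

lemma mulVec_pv (M : Matrix V V ℝ) (s t : V) :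
    M.mulVec (pv s t) = fun u => M u s - M u t := by
  funext u
  exact dot_pv s t (fun v => M u v)

lemma res_eq_dot (G : WMG) (hG : G.Connected) (s t : G.V) :
    G.res s t = pv s t ⬝ᵥ G.lap.mpinv.mulVec (pv s t) := by
  rw [mulVec_pv, res]
  have h := pv_dot s t (fun u => G.lap.mpinv u s - G.lap.mpinv u t)
  rw [h, mpinv_entry_symm G hG t s]
  ring

lemma volt_diff_eq (G : WMG) (p q s t : G.V) :
    G.volt p q s - G.volt p q t = -(pv p q ⬝ᵥ G.lap.mpinv.mulVec (pv s t)) := by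
  rw [mulVec_pv]
  have h := pv_dot p q (fun u => G.lap.mpinv u s - G.lap.mpinv u t)
  rw [h, volt, volt]
  ring

lemma dot_mulVec_symm {M : Matrix V V ℝ} (hM : Mᵀ = M) (x y : V → ℝ) :
    x ⬝ᵥ M.mulVec y = y ⬝ᵥ M.mulVec x := by
  rw [Matrix.dotProduct_mulVec, ← Matrix.mulVec_transpose, hM, dotProduct_comm]


lemma sum_pv (s t : V) : ∑ x, pv s t x = 0 := by
  simp only [pv]
  rw [Finset.sum_sub_distrib, sum_ind, sum_ind, sub_self]

lemma sum_fiber_ind {Q : Type} (π : V → Q) (z s : V) :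
    ∑ x : V, (if π x = π z then ind x s else 0) = ind (π s) (π z) := by
  rw [Finset.sum_congr rfl (fun x _ => ?_), Finset.sum_ite_eq' Finset.univ s
    (fun _ => ind (π s) (π z))]
  · simp
  · by_cases hxs : x = s
    · subst hxs; simp [ind]
    · simp only [hxs, if_false, ind]
      split_ifs <;> simp_all

lemma delete_lap_mulVec (G : WMG) (e : G.E) (x : G.V → ℝ) (u : G.V) :
    G.lap.mulVec x u = (G.delete e).lap.mulVec x u
      + (G.len e)⁻¹ * (pv (G.ends e).1 (G.ends e).2 ⬝ᵥ x) * pv (G.ends e).1 (G.ends e).2 u := by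
  have hI : (G.delete e).instE = (Subtype.fintype fun f => f ≠ e) := Subsingleton.elim _ _
  have hd : (G.delete e).lap.mulVec x u = ∑ f : {f : G.E // f ≠ e},
      ((G.len f.1)⁻¹ * (x (G.ends f.1).1 - x (G.ends f.1).2)) * pv (G.ends f.1).1 (G.ends f.1).2 u := by
    erw [lap_mulVec, Finset.sum_apply, hI]
    exact Finset.sum_congr rfl fun f _ => rfl
  have hsub : ∑ f ∈ Finset.univ.erase e,
      ((G.len f)⁻¹ * (x (G.ends f).1 - x (G.ends f).2)) * pv (G.ends f).1 (G.ends f).2 u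
      = ∑ f : {f : G.E // f ≠ e},
      ((G.len f.1)⁻¹ * (x (G.ends f.1).1 - x (G.ends f.1).2)) * pv (G.ends f.1).1 (G.ends f.1).2 u :=
    Finset.sum_subtype _ (fun y => by simp) _
  rw [hd, ← hsub, lap_mulVec, Finset.sum_apply,
    ← Finset.sum_erase_add Finset.univ _ (Finset.mem_univ e)]
  simp only [Pi.smul_apply, smul_eq_mul]
  rw [pv_dot]

lemma contractMap_ends (G : WMG) (e : G.E) :
    G.contractMap e (G.ends e).1 = G.contractMap e (G.ends e).2 :=
  Quot.sound ⟨rfl, rfl⟩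

lemma contract_reach (G : WMG) (e : G.E) {x y : G.V} (h : G.Reach x y) :
    (G.contract e).Reach (G.contractMap e x) (G.contractMap e y) := by
  induction h with
  | refl => exact Relation.ReflTransGen.refl
  | @tail b c _ hadj ih =>
    obtain ⟨f, hf | hf⟩ := hadj
    · by_cases hfe : f = e
      · rw [hfe] at hf
        have h1 : G.contractMap e b = G.contractMap e c := by
          have h2 := G.contractMap_ends e
          rw [hf] at h2
          exact h2
        rw [← h1]; exact ih
      · refine ih.tail ⟨⟨f, hfe⟩, Or.inl ?_⟩
        show (Quot.mk _ (G.ends f).1, Quot.mk _ (G.ends f).2) = _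
        rw [hf]
        rfl
    · by_cases hfe : f = e
      · rw [hfe] at hf
        have h1 : G.contractMap e c = G.contractMap e b := by
          have h2 := G.contractMap_ends e
          rw [hf] at h2
          exact h2
        rw [h1]; exact ih
      · refine ih.tail ⟨⟨f, hfe⟩, Or.inr ?_⟩
        show (Quot.mk _ (G.ends f).1, Quot.mk _ (G.ends f).2) = _
        rw [hf]
        rfl

lemma contract_connected (G : WMG) (hG : G.Connected) (e : G.E) :
    (G.contract e).Connected := by
  obtain ⟨x0⟩ := hG.1
  refine ⟨⟨G.contractMap e x0⟩, fun u v => ?_⟩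
  induction u using Quot.ind with | _ a =>
  induction v using Quot.ind with | _ b =>
  exact G.contract_reach e (hG.2 a b)


lemma lap_quot_mulVec (H : WMG) (r : H.V → H.V → Prop) (ub : (H.quot r).V → ℝ) (z : H.V) :
    (H.quot r).lap.mulVec ub (Quot.mk r z) =
      ∑ x : H.V, if Quot.mk r x = Quot.mk r z
        then H.lap.mulVec (fun v => ub (Quot.mk r v)) x else 0 := by
  have hrhs : ∀ x : H.V, H.lap.mulVec (fun v => ub (Quot.mk r v)) x
      = ∑ f : H.E, ((H.len f)⁻¹ * (ub (Quot.mk r (H.ends f).1) - ub (Quot.mk r (H.ends f).2)))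
          * pv (H.ends f).1 (H.ends f).2 x := by
    intro x
    rw [lap_mulVec, Finset.sum_apply]
    exact Finset.sum_congr rfl fun f _ => rfl
  have hlhs : (H.quot r).lap.mulVec ub (Quot.mk r z)
      = ∑ f : H.E, ((H.len f)⁻¹ * (ub (Quot.mk r (H.ends f).1) - ub (Quot.mk r (H.ends f).2)))
          * (ind (Quot.mk r (H.ends f).1) (Quot.mk r z) - ind (Quot.mk r (H.ends f).2) (Quot.mk r z)) := by
    erw [lap_mulVec, Finset.sum_apply]
    have hI : (H.quot r).instE = H.instE := Subsingleton.elim _ _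
    rw [hI]
    refine Finset.sum_congr rfl fun f _ => ?_
    show ((H.len f)⁻¹ * (ub (Quot.mk r (H.ends f).1) - ub (Quot.mk r (H.ends f).2))) •
      pv (Quot.mk r (H.ends f).1) (Quot.mk r (H.ends f).2) (Quot.mk r z) = _
    rw [smul_eq_mul, pv]
    rw [ind_comm (Quot.mk r z) (Quot.mk r (H.ends f).1), ind_comm (Quot.mk r z) (Quot.mk r (H.ends f).2)]
  rw [hlhs]
  have hswap : ∀ f : H.E, ∑ x : H.V, (if Quot.mk r x = Quot.mk r z
      then ((H.len f)⁻¹ * (ub (Quot.mk r (H.ends f).1) - ub (Quot.mk r (H.ends f).2)))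
        * pv (H.ends f).1 (H.ends f).2 x else 0)
      = ((H.len f)⁻¹ * (ub (Quot.mk r (H.ends f).1) - ub (Quot.mk r (H.ends f).2)))
        * (ind (Quot.mk r (H.ends f).1) (Quot.mk r z) - ind (Quot.mk r (H.ends f).2) (Quot.mk r z)) := by
    intro f
    set C := (H.len f)⁻¹ * (ub (Quot.mk r (H.ends f).1) - ub (Quot.mk r (H.ends f).2)) with hC
    calc ∑ x : H.V, (if Quot.mk r x = Quot.mk r z then C * pv (H.ends f).1 (H.ends f).2 x else 0)
        = ∑ x : H.V, ((if Quot.mk r x = Quot.mk r z then ind x (H.ends f).1 else 0)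
            - (if Quot.mk r x = Quot.mk r z then ind x (H.ends f).2 else 0)) * C := by
          refine Finset.sum_congr rfl fun x _ => ?_
          split_ifs with h
          · rw [pv]; ring
          · ring
    _ = ((∑ x : H.V, (if Quot.mk r x = Quot.mk r z then ind x (H.ends f).1 else 0))
          - (∑ x : H.V, (if Quot.mk r x = Quot.mk r z then ind x (H.ends f).2 else 0))) * C := by
          rw [← Finset.sum_mul, Finset.sum_sub_distrib]
    _ = _ := by
          rw [sum_fiber_ind (Quot.mk r) z (H.ends f).1, sum_fiber_ind (Quot.mk r) z (H.ends f).2]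
          ring
  calc ∑ f : H.E, ((H.len f)⁻¹ * (ub (Quot.mk r (H.ends f).1) - ub (Quot.mk r (H.ends f).2)))
        * (ind (Quot.mk r (H.ends f).1) (Quot.mk r z) - ind (Quot.mk r (H.ends f).2) (Quot.mk r z))
      = ∑ f : H.E, ∑ x : H.V, (if Quot.mk r x = Quot.mk r z
          then ((H.len f)⁻¹ * (ub (Quot.mk r (H.ends f).1) - ub (Quot.mk r (H.ends f).2)))
            * pv (H.ends f).1 (H.ends f).2 x else 0) := by
        exact Finset.sum_congr rfl fun f _ => (hswap f).symm
  _ = ∑ x : H.V, ∑ f : H.E, (if Quot.mk r x = Quot.mk r z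
          then ((H.len f)⁻¹ * (ub (Quot.mk r (H.ends f).1) - ub (Quot.mk r (H.ends f).2)))
            * pv (H.ends f).1 (H.ends f).2 x else 0) := Finset.sum_comm
  _ = ∑ x : H.V, (if Quot.mk r x = Quot.mk r z
          then H.lap.mulVec (fun v => ub (Quot.mk r v)) x else 0) := by
        refine Finset.sum_congr rfl fun x _ => ?_
        split_ifs with h
        · rw [hrhs x]
        · exact Finset.sum_eq_zero fun f _ => rfl


lemma adj_symm (G : WMG) {x y : G.V} (h : G.Adj x y) : G.Adj y x := by
  obtain ⟨f, hf | hf⟩ := h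
  · exact ⟨f, Or.inr hf⟩
  · exact ⟨f, Or.inl hf⟩

lemma reach_symm (G : WMG) {x y : G.V} (h : G.Reach x y) : G.Reach y x := by
  induction h with
  | refl => exact Relation.ReflTransGen.refl
  | tail _ hadj ih =>
    exact Relation.ReflTransGen.trans (Relation.ReflTransGen.single (G.adj_symm hadj)) ih

lemma res_contract_eq (G : WMG) (hG : G.Connected) (e : G.E) (s t : G.V) (u : G.V → ℝ) (β : ℝ)
    (hu : ∀ x : G.V, (G.delete e).lap.mulVec u x
      = pv s t x - β * pv (G.ends e).1 (G.ends e).2 x)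
    (hpq : u (G.ends e).1 = u (G.ends e).2) :
    (G.contract e).res (G.contractMap e s) (G.contractMap e t) = u s - u t := by
  have hconn := G.contract_connected hG e
  set r : G.V → G.V → Prop := fun x y => x = (G.ends e).1 ∧ y = (G.ends e).2 with hr
  let ub : (G.contract e).V → ℝ := Quot.lift u (by rintro x y ⟨rfl, rfl⟩; exact hpq)
  have hkey : (G.contract e).lap.mulVec ub
      = pv (G.contractMap e s) (G.contractMap e t) := by
    funext zq
    induction zq using Quot.ind with | _ z =>
    show (G.contract e).lap.mulVec ub (Quot.mk r z)
      = pv (G.contractMap e s) (G.contractMap e t) (Quot.mk r z)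
    have h3 : (G.contract e).lap.mulVec ub (Quot.mk r z)
        = ∑ x : G.V, if Quot.mk r x = Quot.mk r z then (G.delete e).lap.mulVec u x else 0 :=
      lap_quot_mulVec (G.delete e) r ub z
    rw [h3]
    have h4 : ∑ x : G.V, (if Quot.mk r x = Quot.mk r z then (G.delete e).lap.mulVec u x else 0)
        = ∑ x : G.V, ((if Quot.mk r x = Quot.mk r z then ind x s else 0)
            - (if Quot.mk r x = Quot.mk r z then ind x t else 0)
            - β * ((if Quot.mk r x = Quot.mk r z then ind x (G.ends e).1 else 0)
            - (if Quot.mk r x = Quot.mk r z then ind x (G.ends e).2 else 0))) := by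
      refine Finset.sum_congr rfl fun x _ => ?_
      split_ifs with h
      · rw [hu x, pv, pv]
      · ring
    rw [h4]
    have hsplit : ∀ a b c d : G.V → ℝ, ∑ x : G.V, (a x - b x - β * (c x - d x))
        = (∑ x, a x) - (∑ x, b x) - β * ((∑ x, c x) - (∑ x, d x)) := by
      intro a b c d
      rw [Finset.sum_sub_distrib]
      congr 1
      · exact Finset.sum_sub_distrib a b
      · rw [← Finset.mul_sum, Finset.sum_sub_distrib]
    rw [hsplit, sum_fiber_ind (Quot.mk r) z s, sum_fiber_ind (Quot.mk r) z t,
      sum_fiber_ind (Quot.mk r) z (G.ends e).1, sum_fiber_ind (Quot.mk r) z (G.ends e).2]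
    have hpq' : Quot.mk r (G.ends e).1 = Quot.mk r (G.ends e).2 := Quot.sound ⟨rfl, rfl⟩
    rw [hpq', sub_self, mul_zero, sub_zero]
    show _ = ind (Quot.mk r z) (G.contractMap e s) - ind (Quot.mk r z) (G.contractMap e t)
    rw [ind_comm (Quot.mk r z) (G.contractMap e s), ind_comm (Quot.mk r z) (G.contractMap e t)]
    rfl
  have hres := res_eq_dot (G.contract e) hconn (G.contractMap e s) (G.contractMap e t)
  rw [hres, mpinv_solve (G.contract e) hconn _ hkey (sum_pv _ _), pv_dot]
  rfl

lemma res_pos (H : WMG) (hH : H.Connected) {p q : H.V} (hpq : p ≠ q) : 0 < H.res p q := by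
  set g := H.lap.mpinv.mulVec (pv p q) with hg
  have hsol : H.lap.mulVec g = pv p q := lap_mpinv_solution H hH (sum_pv p q)
  have hres : H.res p q = pv p q ⬝ᵥ g := res_eq_dot H hH p q
  have h1 : H.res p q = g ⬝ᵥ H.lap.mulVec g := by
    rw [hres, ← hsol, dotProduct_comm]
  have h2 : 0 ≤ H.res p q := h1 ▸ H.dot_lap_self_nonneg g
  rcases eq_or_lt_of_le h2 with h0 | h0
  · exfalso
    have hz : g ⬝ᵥ H.lap.mulVec g = 0 := by rw [← h1, ← h0]
    have hconst : ∀ x y : H.V, g x = g y := fun x y =>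
      H.eq_on_reach g (fun f => H.dot_lap_eq_zero g hz f) (hH.2 x y)
    have hgc : g = fun _ => g p := funext fun x => hconst x p
    rw [hgc, H.lap_mulVec_const (g p)] at hsol
    have := congrFun hsol p
    simp [pv, ind, hpq] at this
  · exact h0

lemma res_nonneg (H : WMG) (hH : H.Connected) (p q : H.V) : 0 ≤ H.res p q := by
  set g := H.lap.mpinv.mulVec (pv p q) with hg
  have hsol : H.lap.mulVec g = pv p q := lap_mpinv_solution H hH (sum_pv p q)
  have hres : H.res p q = pv p q ⬝ᵥ g := res_eq_dot H hH p q
  have h1 : H.res p q = g ⬝ᵥ H.lap.mulVec g := by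
    rw [hres, ← hsol, dotProduct_comm]
  exact h1 ▸ H.dot_lap_self_nonneg g

lemma delete_reach_endpoint (G : WMG) (hG : G.Connected) (e : G.E) (x : G.V) :
    (G.delete e).Reach x (G.ends e).1 ∨ (G.delete e).Reach x (G.ends e).2 := by
  have h := hG.2 x (G.ends e).1
  induction h using Relation.ReflTransGen.head_induction_on with
  | refl => exact Or.inl Relation.ReflTransGen.refl
  | head hadj _ ih =>
    rename_i a c _
    obtain ⟨f, hf | hf⟩ := hadj
    · by_cases hfe : f = e
      · rw [hfe] at hf
        left
        have : a = (G.ends e).1 := by rw [hf]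
        rw [this]
        exact Relation.ReflTransGen.refl
      · rcases ih with h1 | h1
        · exact Or.inl (Relation.ReflTransGen.head ⟨⟨f, hfe⟩, Or.inl hf⟩ h1)
        · exact Or.inr (Relation.ReflTransGen.head ⟨⟨f, hfe⟩, Or.inl hf⟩ h1)
    · by_cases hfe : f = e
      · rw [hfe] at hf
        right
        have : a = (G.ends e).2 := by rw [hf]
        rw [this]
        exact Relation.ReflTransGen.refl
      · rcases ih with h1 | h1
        · exact Or.inl (Relation.ReflTransGen.head ⟨⟨f, hfe⟩, Or.inr hf⟩ h1)
        · exact Or.inr (Relation.ReflTransGen.head ⟨⟨f, hfe⟩, Or.inr hf⟩ h1)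

lemma delete_connected_of_reach (G : WMG) (hG : G.Connected) (e : G.E)
    (h : (G.delete e).Reach (G.ends e).1 (G.ends e).2) : (G.delete e).Connected := by
  refine ⟨hG.1, fun u v => ?_⟩
  have hu := G.delete_reach_endpoint hG e u
  have hv := G.delete_reach_endpoint hG e v
  have h' := (G.delete e).reach_symm h
  rcases hu with hu | hu <;> rcases hv with hv | hv
  · exact hu.trans ((G.delete e).reach_symm hv)
  · exact hu.trans (h.trans ((G.delete e).reach_symm hv))
  · exact hu.trans (h'.trans ((G.delete e).reach_symm hv))
  · exact hu.trans ((G.delete e).reach_symm hv)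

end WMG

open WMG Matrix

/-- **Explicit Rayleigh's Monotonicity Law I.**  Let `e` be an edge of the
finite connected weighted graph `G` with endpoints `p_i, q_i` and length `L_i`.
If `e` is not a bridge, then for all vertices `s, t`:
`r(s,t) = r_{Ḡ_e}(s,t) + ((L_i+R_i)/(L_i R_i)) (j_{p_i}(q_i,s) - j_{p_i}(q_i,t))²
        = r_{Ḡ_e}(s,t) + (L_i/(R_i (L_i+R_i))) (j^{G-e}_{p_i}(q_i,s) - j^{G-e}_{p_i}(q_i,t))²`,
in particular `r(s,t) ≥ r_{Ḡ_e}(s,t)` with equality iff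
`j_{p_i}(q_i,s) = j_{p_i}(q_i,t)`.  If `e` is a bridge then
`r(s,t) = r_{Ḡ_e}(s,t)` when `s, t` are in the same connected component of
`G − e`, and `r(s,t) = r_{Ḡ_e}(s,t) + L_i` otherwise. -/
theorem explicit_rayleigh_monotonicity_law_I (G : WMG) (hG : G.Connected)
    (e : G.E) (s t : G.V) :
    (¬ G.IsBridge e →
      (G.res s t = (G.contract e).res (G.contractMap e s) (G.contractMap e t) +
          ((G.len e + (G.delete e).res (G.ends e).1 (G.ends e).2) /
            (G.len e * (G.delete e).res (G.ends e).1 (G.ends e).2)) *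
            (G.volt (G.ends e).1 (G.ends e).2 s -
             G.volt (G.ends e).1 (G.ends e).2 t) ^ 2) ∧
      (G.res s t = (G.contract e).res (G.contractMap e s) (G.contractMap e t) +
          (G.len e / ((G.delete e).res (G.ends e).1 (G.ends e).2 *
            (G.len e + (G.delete e).res (G.ends e).1 (G.ends e).2))) *
            ((G.delete e).volt (G.ends e).1 (G.ends e).2 s -
             (G.delete e).volt (G.ends e).1 (G.ends e).2 t) ^ 2) ∧
      (G.contract e).res (G.contractMap e s) (G.contractMap e t) ≤ G.res s t ∧
      (G.res s t = (G.contract e).res (G.contractMap e s) (G.contractMap e t) ↔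
        G.volt (G.ends e).1 (G.ends e).2 s = G.volt (G.ends e).1 (G.ends e).2 t)) ∧
    (G.IsBridge e →
      ((G.delete e).Reach s t →
        G.res s t = (G.contract e).res (G.contractMap e s) (G.contractMap e t)) ∧
      (¬ (G.delete e).Reach s t →
        G.res s t = (G.contract e).res (G.contractMap e s) (G.contractMap e t) +
          G.len e)) := by
  classical
  have hLe0 : 0 < G.len e := G.len_pos e
  constructor
  · -- non-bridge case
    intro hnb
    have hdel : (G.delete e).Connected := not_not.mp hnb
    by_cases hpq : (G.ends e).1 = (G.ends e).2
    · -- self-loop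
      have hvolt : ∀ x, G.volt (G.ends e).1 (G.ends e).2 x = 0 := by
        intro x; rw [volt, ← hpq]; ring
      have hvolt' : ∀ x, (G.delete e).volt (G.ends e).1 (G.ends e).2 x = 0 := by
        intro x; erw [volt, ← hpq]; ring
      have w0 : ∀ x : G.V, pv (G.ends e).1 (G.ends e).2 x = 0 := by
        intro x
        show ind x (G.ends e).1 - ind x (G.ends e).2 = 0
        rw [← hpq, sub_self]
      set f := (G.delete e).lap.mpinv.mulVec (pv s t) with hfdef
      have hfs : (G.delete e).lap.mulVec f = pv s t :=
        lap_mpinv_solution _ hdel (sum_pv s t)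
      have hGf : G.lap.mulVec f = pv s t := by
        funext u
        rw [G.delete_lap_mulVec e f u, w0 u, mul_zero, add_zero]
        exact congrFun hfs u
      have hrG : G.res s t = f s - f t := by
        erw [res_eq_dot G hG s t, mpinv_solve G hG (pv s t) hGf (sum_pv s t), pv_dot]
      have hrC : (G.contract e).res (G.contractMap e s) (G.contractMap e t) = f s - f t := by
        refine res_contract_eq G hG e s t f 0 (fun x => ?_) (congrArg f hpq)
        rw [congrFun hfs x]; ring
      refine ⟨?_, ?_, ?_, ?_⟩
      · rw [hrG, hrC, hvolt s, hvolt t]; ring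
      · rw [hrG, hrC, hvolt' s, hvolt' t]; ring
      · rw [hrG, hrC]
      · constructor
        · intro _; rw [hvolt s, hvolt t]
        · intro _; rw [hrG, hrC]
    · -- proper edge, not a bridge
      set R := (G.delete e).res (G.ends e).1 (G.ends e).2 with hRdef
      have hR0 : 0 < R := res_pos (G.delete e) hdel hpq
      have hLR0 : 0 < G.len e + R := by linarith
      set g := (G.delete e).lap.mpinv.mulVec (pv (G.ends e).1 (G.ends e).2) with hgdef
      have hg : (G.delete e).lap.mulVec g = pv (G.ends e).1 (G.ends e).2 :=
        lap_mpinv_solution _ hdel (sum_pv _ _)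
      set f := (G.delete e).lap.mpinv.mulVec (pv s t) with hfdef
      have hf : (G.delete e).lap.mulVec f = pv s t :=
        lap_mpinv_solution _ hdel (sum_pv s t)
      have hRg : pv (G.ends e).1 (G.ends e).2 ⬝ᵥ g = R :=
        (res_eq_dot (G.delete e) hdel (G.ends e).1 (G.ends e).2).symm
      set D := pv (G.ends e).1 (G.ends e).2 ⬝ᵥ f with hDdef
      have hbg : pv s t ⬝ᵥ g = D := by
        erw [hgdef, hDdef, hfdef, dot_mulVec_symm (mpinv_lap_transpose (G.delete e) hdel)]
        rfl
      set α := -D / (G.len e + R) with hα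
      set hv := f + α • g with hhv
      have hdotvh : pv (G.ends e).1 (G.ends e).2 ⬝ᵥ hv = D + α * R := by
        erw [hhv, dotProduct_add, dotProduct_smul, smul_eq_mul, ← hDdef, hRg]
      have hGh : G.lap.mulVec hv = pv s t := by
        funext u
        rw [G.delete_lap_mulVec e hv u]
        have h1 : (G.delete e).lap.mulVec hv u = pv s t u + α * pv (G.ends e).1 (G.ends e).2 u := by
          have h2 : (G.delete e).lap.mulVec hv = (G.delete e).lap.mulVec f
              + α • (G.delete e).lap.mulVec g := by
            rw [hhv, Matrix.mulVec_add, Matrix.mulVec_smul]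
          rw [congrFun h2 u]
          rw [hf, hg]
          rfl
        rw [h1, hdotvh]
        have hcoef : α + (G.len e)⁻¹ * (D + α * R) = 0 := by
          rw [hα]
          field_simp
          ring
        have hexp : pv s t u + α * pv (G.ends e).1 (G.ends e).2 u
            + (G.len e)⁻¹ * (D + α * R) * pv (G.ends e).1 (G.ends e).2 u
            = pv s t u + (α + (G.len e)⁻¹ * (D + α * R)) * pv (G.ends e).1 (G.ends e).2 u := by
          ring
        rw [hexp, hcoef, zero_mul, add_zero]
      have hrG : G.res s t = (pv s t ⬝ᵥ f) + α * D := by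
        erw [res_eq_dot G hG s t, mpinv_solve G hG (pv s t) hGh (sum_pv s t), hhv,
          dotProduct_add, dotProduct_smul, smul_eq_mul, hbg]
      -- contraction potential
      set u0 := f + (-(D / R)) • g with hu0
      have hu0pq : u0 (G.ends e).1 = u0 (G.ends e).2 := by
        have hd : pv (G.ends e).1 (G.ends e).2 ⬝ᵥ u0 = 0 := by
          erw [hu0, dotProduct_add, dotProduct_smul, smul_eq_mul, ← hDdef, hRg]
          field_simp
          ring
        erw [pv_dot] at hd
        linarith
      have hrC : (G.contract e).res (G.contractMap e s) (G.contractMap e t)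
          = (pv s t ⬝ᵥ f) - (D / R) * D := by
        have hL'u0 : ∀ x, (G.delete e).lap.mulVec u0 x
            = pv s t x - (D / R) * pv (G.ends e).1 (G.ends e).2 x := by
          intro x
          have h2 : (G.delete e).lap.mulVec u0 = (G.delete e).lap.mulVec f
              + (-(D / R)) • (G.delete e).lap.mulVec g := by
            rw [hu0, Matrix.mulVec_add, Matrix.mulVec_smul]
          rw [congrFun h2 x, hf, hg]
          show pv s t x + (-(D / R)) * pv (G.ends e).1 (G.ends e).2 x = _
          ring
        have h3 := res_contract_eq G hG e s t u0 (D / R) hL'u0 hu0pq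
        rw [h3]
        have h4 : u0 s - u0 t = pv s t ⬝ᵥ u0 := (pv_dot s t u0).symm
        erw [h4, hu0, dotProduct_add, dotProduct_smul, smul_eq_mul, hbg]
        ring
      have hvG : G.volt (G.ends e).1 (G.ends e).2 s - G.volt (G.ends e).1 (G.ends e).2 t
          = -(D + α * R) := by
        rw [volt_diff_eq G (G.ends e).1 (G.ends e).2 s t,
          mpinv_solve G hG (pv (G.ends e).1 (G.ends e).2) hGh
            (sum_pv (G.ends e).1 (G.ends e).2), hdotvh]
      have hvD : (G.delete e).volt (G.ends e).1 (G.ends e).2 s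
          - (G.delete e).volt (G.ends e).1 (G.ends e).2 t = -D := by
        erw [volt_diff_eq (G.delete e) (G.ends e).1 (G.ends e).2 s t, ← hfdef, ← hDdef]
      have hDiff : G.res s t - (G.contract e).res (G.contractMap e s) (G.contractMap e t)
          = D^2 * G.len e / (R * (G.len e + R)) := by
        rw [hrG, hrC, hα]
        field_simp
        ring
      refine ⟨?_, ?_, ?_, ?_⟩
      · rw [hvG]
        have : G.res s t = (G.contract e).res (G.contractMap e s) (G.contractMap e t)
            + D^2 * G.len e / (R * (G.len e + R)) := by linarith
        rw [this, hα]
        field_simp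
        ring
      · rw [hvD]
        have : G.res s t = (G.contract e).res (G.contractMap e s) (G.contractMap e t)
            + D^2 * G.len e / (R * (G.len e + R)) := by linarith
        rw [this]
        field_simp
      · have h5 : 0 ≤ D^2 * G.len e / (R * (G.len e + R)) := by positivity
        linarith
      · constructor
        · intro heq
          have hz : D^2 * G.len e / (R * (G.len e + R)) = 0 := by
            rw [← hDiff, heq]; ring
          have hD0 : D = 0 := by
            have hne : R * (G.len e + R) ≠ 0 := by positivity
            rw [div_eq_zero_iff] at hz
            rcases hz with hz | hz
            · rcases mul_eq_zero.mp hz with hz | hz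
              · exact pow_eq_zero_iff (by norm_num) |>.mp hz
              · exact absurd hz hLe0.ne'
            · exact absurd hz hne
          have : G.volt (G.ends e).1 (G.ends e).2 s - G.volt (G.ends e).1 (G.ends e).2 t = 0 := by
            rw [hvG, hα, hD0]
            norm_num
          linarith
        · intro heq
          have h6 : D + α * R = 0 := by
            have := hvG
            rw [heq, sub_self] at this
            linarith
          have hαval : α * (G.len e + R) = -D := by
            rw [hα]
            field_simp
          have h10 : D * G.len e = 0 := by
            linear_combination (G.len e + R) * h6 - R * hαval
          have hD0 : D = 0 := by
            rcases mul_eq_zero.mp h10 with h | h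
            · exact h
            · exact absurd h hLe0.ne'
          have : G.res s t - (G.contract e).res (G.contractMap e s) (G.contractMap e t) = 0 := by
            rw [hDiff, hD0]
            ring
          linarith
  · -- bridge case
    intro hbr
    have hnr : ¬ (G.delete e).Reach (G.ends e).1 (G.ends e).2 := fun hre =>
      hbr (G.delete_connected_of_reach hG e hre)
    set χ := fun x : G.V => if (G.delete e).Reach x (G.ends e).1 then (1:ℝ) else 0 with hχ
    have hχp : χ (G.ends e).1 = 1 := if_pos Relation.ReflTransGen.refl
    have hχq : χ (G.ends e).2 = 0 :=
      if_neg (fun h => hnr ((G.delete e).reach_symm h))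
    have hχadj : ∀ fe : (G.delete e).E,
        χ ((G.delete e).ends fe).1 = χ ((G.delete e).ends fe).2 := by
      intro fe
      have hadj : (G.delete e).Adj ((G.delete e).ends fe).1 ((G.delete e).ends fe).2 :=
        ⟨fe, Or.inl (by simp)⟩
      simp only [hχ]
      split_ifs with h1 h2
      · rfl
      · exact absurd (((G.delete e).reach_symm
          (Relation.ReflTransGen.single hadj)).trans h1) h2
      · exact absurd ((Relation.ReflTransGen.single hadj).trans ‹_›) h1
      · rfl
    have hχlap : (G.delete e).lap.mulVec χ = 0 := by
      funext u'
      erw [lap_mulVec, Finset.sum_apply]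
      refine Finset.sum_eq_zero fun fe _ => ?_
      simp [hχadj fe]
    set f := G.lap.mpinv.mulVec (pv s t) with hfdef
    have hGf : G.lap.mulVec f = pv s t := lap_mpinv_solution G hG (sum_pv s t)
    have hrG : G.res s t = f s - f t := by
      rw [res_eq_dot G hG s t, mpinv_solve G hG (pv s t) hGf (sum_pv s t), pv_dot]
    have hL'f : ∀ x, (G.delete e).lap.mulVec f x = pv s t x
        - (G.len e)⁻¹ * (pv (G.ends e).1 (G.ends e).2 ⬝ᵥ f) * pv (G.ends e).1 (G.ends e).2 x := by
      intro x
      have h1 := G.delete_lap_mulVec e f x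
      have h2 : G.lap.mulVec f x = pv s t x := congrFun hGf x
      linarith
    set γ := f (G.ends e).2 - f (G.ends e).1 with hγ
    set u0 := f + γ • χ with hu0
    have hL'u0 : ∀ x, (G.delete e).lap.mulVec u0 x = pv s t x
        - ((G.len e)⁻¹ * (pv (G.ends e).1 (G.ends e).2 ⬝ᵥ f)) * pv (G.ends e).1 (G.ends e).2 x := by
      intro x
      have h2 : (G.delete e).lap.mulVec u0 = (G.delete e).lap.mulVec f
          + γ • (G.delete e).lap.mulVec χ := by
        erw [hu0, Matrix.mulVec_add, Matrix.mulVec_smul]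
      rw [congrFun h2 x, hχlap]
      simp only [Pi.add_apply, Pi.smul_apply, Pi.zero_apply, smul_eq_mul, mul_zero, add_zero]
      rw [hL'f x]
    have hu0pq : u0 (G.ends e).1 = u0 (G.ends e).2 := by
      simp only [hu0, Pi.add_apply, Pi.smul_apply, smul_eq_mul, hχp, hχq, hγ]
      ring
    have hrC : (G.contract e).res (G.contractMap e s) (G.contractMap e t) = u0 s - u0 t :=
      res_contract_eq G hG e s t u0 ((G.len e)⁻¹ * (pv (G.ends e).1 (G.ends e).2 ⬝ᵥ f))
        hL'u0 hu0pq
    have hkey : χ s - χ t = (G.len e)⁻¹ * (pv (G.ends e).1 (G.ends e).2 ⬝ᵥ f) := by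
      have h1 : χ ⬝ᵥ G.lap.mulVec f = χ s - χ t := by rw [hGf, dot_pv]
      have h2 : χ ⬝ᵥ G.lap.mulVec f
          = χ ⬝ᵥ ((G.delete e).lap.mulVec f)
            + ((G.len e)⁻¹ * (pv (G.ends e).1 (G.ends e).2 ⬝ᵥ f)) * (χ ⬝ᵥ pv (G.ends e).1 (G.ends e).2) := by
        have h3 : ∀ u', χ u' * G.lap.mulVec f u' = χ u' * (G.delete e).lap.mulVec f u'
            + ((G.len e)⁻¹ * (pv (G.ends e).1 (G.ends e).2 ⬝ᵥ f))
              * (χ u' * pv (G.ends e).1 (G.ends e).2 u') := by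
          intro u'
          rw [G.delete_lap_mulVec e f u']
          ring
        calc χ ⬝ᵥ G.lap.mulVec f = ∑ u', χ u' * G.lap.mulVec f u' := rfl
        _ = ∑ u', (χ u' * (G.delete e).lap.mulVec f u'
            + ((G.len e)⁻¹ * (pv (G.ends e).1 (G.ends e).2 ⬝ᵥ f))
              * (χ u' * pv (G.ends e).1 (G.ends e).2 u')) :=
          Finset.sum_congr rfl fun u' _ => h3 u'
        _ = (∑ u', χ u' * (G.delete e).lap.mulVec f u')
            + ((G.len e)⁻¹ * (pv (G.ends e).1 (G.ends e).2 ⬝ᵥ f))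
              * ∑ u', χ u' * pv (G.ends e).1 (G.ends e).2 u' := by
          rw [Finset.sum_add_distrib, Finset.mul_sum]
        _ = _ := rfl
      have h4 : χ ⬝ᵥ ((G.delete e).lap.mulVec f) = 0 := by
        erw [dot_mulVec_symm (lap_transpose (G.delete e)) χ f, hχlap]
        exact dotProduct_zero f
      have h5 : χ ⬝ᵥ pv (G.ends e).1 (G.ends e).2 = 1 := by
        rw [dot_pv, hχp, hχq, sub_zero]
      rw [h2, h4, h5, zero_add, mul_one] at h1
      linarith
    have hγkey : γ = -(G.len e) * (χ s - χ t) := by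
      have h3 : pv (G.ends e).1 (G.ends e).2 ⬝ᵥ f = f (G.ends e).1 - f (G.ends e).2 :=
        pv_dot _ _ f
      have h4 : G.len e * (χ s - χ t) = f (G.ends e).1 - f (G.ends e).2 := by
        rw [hkey, h3, ← mul_assoc, mul_inv_cancel₀ hLe0.ne', one_mul]
      rw [hγ]
      linear_combination h4
    have hfinal : (G.contract e).res (G.contractMap e s) (G.contractMap e t)
        = G.res s t - G.len e * (χ s - χ t)^2 := by
      rw [hrC, hrG]
      have : u0 s - u0 t = (f s - f t) + γ * (χ s - χ t) := by
        simp only [hu0, Pi.add_apply, Pi.smul_apply, smul_eq_mul]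
        ring
      rw [this, hγkey]
      ring
    constructor
    · intro hst
      have hχst : χ s = χ t := by
        simp only [hχ]
        split_ifs with h1 h2
        · rfl
        · exact absurd (((G.delete e).reach_symm hst).trans h1) h2
        · exact absurd (hst.trans ‹_›) h1
        · rfl
      rw [hfinal, hχst]
      ring
    · intro hst
      have hsq : (χ s - χ t)^2 = 1 := by
        rcases G.delete_reach_endpoint hG e s with hs | hs <;>
          rcases G.delete_reach_endpoint hG e t with ht | ht
        · exact absurd (hs.trans ((G.delete e).reach_symm ht)) hst
        · have h1 : χ s = 1 := if_pos hs
          have h2 : χ t = 0 := if_neg (fun h => hst (hs.trans ((G.delete e).reach_symm h)))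
          rw [h1, h2]; norm_num
        · have h1 : χ s = 0 := if_neg (fun h => hst (h.trans ((G.delete e).reach_symm ht)))
          have h2 : χ t = 1 := if_pos ht
          rw [h1, h2]; norm_num
        · exact absurd (hs.trans ((G.delete e).reach_symm ht)) hst
      rw [hfinal, hsq]
      ring
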